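/- (Smooth adjoint sensitivity identity.) Fix θ ∈ ℝᵖ and t₀ ≤ t₁. Let ψ : ℝᵐ × ℝ × ℝᵖ → ℝᵐ be continuously differentiable, and let s : ℝ × ℝᵖ → ℝᵐ be twice continuously differentiable with ∂s/∂t(t, θ') = ψ(s(t, θ'), t, θ') for all t ∈ [t₀, t₁] and all θ' in a neighborhood of θ, and with s(t₀, θ') independent of θ'. Let r : [t₀, t₁] → ℝᵐ be continuously differentiable with r'(t) = −(∂ψ/∂s(s(t, θ), t, θ))ᵀ r(t) for all t ∈ [t₀, t₁]. Then r(t₁)ᵀ (∂s/∂θ)(t₁, θ) = ∫_{t₀}^{t₁} r(t)ᵀ (∂ψ/∂θ)(s(t, θ), t, θ) dt, an identity of row vectors in ℝᵖ. -/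

import Mathlib

open MeasureTheory Set
open scoped RealInnerProductSpace

/-- Smooth adjoint sensitivity identity. -/
theorem stmt_12 {m p : ℕ}
    (t₀ t₁ : ℝ) (ht : t₀ ≤ t₁)
    (ψ : EuclideanSpace ℝ (Fin m) → ℝ → EuclideanSpace ℝ (Fin p) → EuclideanSpace ℝ (Fin m))
    (hψ : ContDiff ℝ 1
      (fun q : EuclideanSpace ℝ (Fin m) × ℝ × EuclideanSpace ℝ (Fin p) => ψ q.1 q.2.1 q.2.2))
    (θ : EuclideanSpace ℝ (Fin p))
    (s : ℝ → EuclideanSpace ℝ (Fin p) → EuclideanSpace ℝ (Fin m))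
    (hs : ContDiff ℝ 2 (fun q : ℝ × EuclideanSpace ℝ (Fin p) => s q.1 q.2))
    (U : Set (EuclideanSpace ℝ (Fin p))) (hU : U ∈ nhds θ) (hθU : θ ∈ U)
    (hflow : ∀ θ' ∈ U, ∀ t ∈ Icc t₀ t₁,
      HasDerivAt (fun τ => s τ θ') (ψ (s t θ') t θ') t)
    (hinit : ∀ θ' ∈ U, s t₀ θ' = s t₀ θ)
    (r : ℝ → EuclideanSpace ℝ (Fin m))
    (hr : ∀ t ∈ Icc t₀ t₁, HasDerivAt r
      (-(ContinuousLinearMap.adjoint (fderiv ℝ (fun y => ψ y t θ) (s t θ))) (r t)) t) :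
    ∀ u : EuclideanSpace ℝ (Fin p),
      ⟪r t₁, (fderiv ℝ (fun θ' => s t₁ θ') θ) u⟫
        = ∫ t in t₀..t₁, ⟪r t, (fderiv ℝ (fun θ' => ψ (s t θ) t θ') θ) u⟫ := by
  intro u
  set f : ℝ × EuclideanSpace ℝ (Fin p) → EuclideanSpace ℝ (Fin m) :=
    fun q => s q.1 q.2 with hf_def
  set Ψ : EuclideanSpace ℝ (Fin m) × ℝ × EuclideanSpace ℝ (Fin p) → EuclideanSpace ℝ (Fin m) :=
    fun q => ψ q.1 q.2.1 q.2.2 with hΨ_def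
  have hfdiff : Differentiable ℝ f := hs.differentiable (by norm_num)
  have hf' : ContDiff ℝ 1 (fderiv ℝ f) := hs.fderiv_right (by norm_num)
  have hf'diff : Differentiable ℝ (fderiv ℝ f) := hf'.differentiable one_ne_zero
  have hΨdiff : Differentiable ℝ Ψ := hψ.differentiable one_ne_zero
  -- partial derivative of s in θ'
  have hpart : ∀ (t : ℝ) (z : EuclideanSpace ℝ (Fin p)),
      HasFDerivAt (fun z' => s t z')
        ((fderiv ℝ f (t, z)).comp
          ((0 : EuclideanSpace ℝ (Fin p) →L[ℝ] ℝ).prod (ContinuousLinearMap.id ℝ _))) z := by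
    intro t z
    have h1 : HasFDerivAt (fun z' : EuclideanSpace ℝ (Fin p) => ((t, z') : ℝ × _))
        ((0 : EuclideanSpace ℝ (Fin p) →L[ℝ] ℝ).prod (ContinuousLinearMap.id ℝ _)) z :=
      (hasFDerivAt_const t z).prodMk (hasFDerivAt_id z)
    exact ((hfdiff (t, z)).hasFDerivAt).comp z h1
  -- v t := ∂s/∂θ (t,θ) u
  set v : ℝ → EuclideanSpace ℝ (Fin m) :=
    fun t => fderiv ℝ f (t, θ) ((0 : ℝ), u) with hv_def
  have hvt : ∀ t : ℝ, fderiv ℝ (fun θ' => s t θ') θ u = v t := by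
    intro t
    rw [(hpart t θ).fderiv]
    simp [hv_def]
  -- derivative of v
  have hv : ∀ t : ℝ, HasDerivAt v
      (fderiv ℝ (fderiv ℝ f) (t, θ) ((1 : ℝ), (0 : EuclideanSpace ℝ (Fin p))) ((0 : ℝ), u)) t := by
    intro t
    have h1 : HasDerivAt (fun τ : ℝ => ((τ, θ) : ℝ × _))
        ((1 : ℝ), (0 : EuclideanSpace ℝ (Fin p))) t :=
      (hasDerivAt_id t).prodMk (hasDerivAt_const t θ)
    have h2 := ((hf'diff (t, θ)).hasFDerivAt).comp_hasDerivAt t h1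
    have h3 := h2.clm_apply (hasDerivAt_const t ((0 : ℝ), u))
    simpa using h3
  -- symmetry of second derivatives
  have hsymm : ∀ t : ℝ,
      fderiv ℝ (fderiv ℝ f) (t, θ) ((1 : ℝ), (0 : EuclideanSpace ℝ (Fin p))) ((0 : ℝ), u)
        = fderiv ℝ (fderiv ℝ f) (t, θ) ((0 : ℝ), u) ((1 : ℝ), (0 : EuclideanSpace ℝ (Fin p))) :=
    fun t => second_derivative_symmetric (fun y => (hfdiff y).hasFDerivAt)
      ((hf'diff (t, θ)).hasFDerivAt) _ _
  -- time derivative of s as application of full fderiv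
  have hpt : ∀ (θ' : EuclideanSpace ℝ (Fin p)) (t : ℝ),
      HasDerivAt (fun τ => s τ θ')
        (fderiv ℝ f (t, θ') ((1 : ℝ), (0 : EuclideanSpace ℝ (Fin p)))) t := by
    intro θ' t
    have h1 : HasDerivAt (fun τ : ℝ => ((τ, θ') : ℝ × _))
        ((1 : ℝ), (0 : EuclideanSpace ℝ (Fin p))) t :=
      (hasDerivAt_id t).prodMk (hasDerivAt_const t θ')
    exact ((hfdiff (t, θ')).hasFDerivAt).comp_hasDerivAt t h1
  have hfe : ∀ t ∈ Icc t₀ t₁, ∀ θ' ∈ U,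
      fderiv ℝ f (t, θ') ((1 : ℝ), (0 : EuclideanSpace ℝ (Fin p))) = ψ (s t θ') t θ' :=
    fun t htI θ' hθ' => (hpt θ' t).unique (hflow θ' hθ' t htI)
  -- the two partial derivatives of ψ in terms of the full derivative
  have hA : ∀ t : ℝ, HasFDerivAt (fun y => ψ y t θ)
      ((fderiv ℝ Ψ (s t θ, t, θ)).comp
        ((ContinuousLinearMap.id ℝ _).prod (0 : _ →L[ℝ] ℝ × EuclideanSpace ℝ (Fin p)))) (s t θ) := by
    intro t
    have h1 : HasFDerivAt
        (fun y : EuclideanSpace ℝ (Fin m) => ((y, t, θ) : _ × ℝ × _))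
        ((ContinuousLinearMap.id ℝ _).prod (0 : _ →L[ℝ] ℝ × EuclideanSpace ℝ (Fin p))) (s t θ) :=
      (hasFDerivAt_id _).prodMk (hasFDerivAt_const (t, θ) _)
    exact ((hΨdiff _).hasFDerivAt).comp _ h1
  have hB : ∀ t : ℝ, HasFDerivAt (fun θ' => ψ (s t θ) t θ')
      ((fderiv ℝ Ψ (s t θ, t, θ)).comp
        ((0 : EuclideanSpace ℝ (Fin p) →L[ℝ] EuclideanSpace ℝ (Fin m)).prod
          ((0 : EuclideanSpace ℝ (Fin p) →L[ℝ] ℝ).prod (ContinuousLinearMap.id ℝ _)))) θ := by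
    intro t
    have h1 : HasFDerivAt
        (fun θ' : EuclideanSpace ℝ (Fin p) => ((s t θ, t, θ') : _ × ℝ × _))
        ((0 : EuclideanSpace ℝ (Fin p) →L[ℝ] EuclideanSpace ℝ (Fin m)).prod
          ((0 : EuclideanSpace ℝ (Fin p) →L[ℝ] ℝ).prod (ContinuousLinearMap.id ℝ _))) θ :=
      (hasFDerivAt_const (s t θ) θ).prodMk ((hasFDerivAt_const t θ).prodMk (hasFDerivAt_id θ))
    exact ((hΨdiff _).hasFDerivAt).comp _ h1
  -- the mixed second derivative: variational equation for v
  have hv' : ∀ t ∈ Icc t₀ t₁, HasDerivAt v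
      ((fderiv ℝ (fun y => ψ y t θ) (s t θ)) (v t)
        + (fderiv ℝ (fun θ' => ψ (s t θ) t θ') θ) u) t := by
    intro t htI
    have key : fderiv ℝ (fderiv ℝ f) (t, θ) ((1 : ℝ), (0 : EuclideanSpace ℝ (Fin p))) ((0 : ℝ), u)
        = (fderiv ℝ (fun y => ψ y t θ) (s t θ)) (v t)
          + (fderiv ℝ (fun θ' => ψ (s t θ) t θ') θ) u := by
      rw [hsymm t]
      -- LHS is the derivative at θ of θ' ↦ ∂f/∂t (t, θ')
      have hGmap : HasFDerivAt (fun θ' => fderiv ℝ f (t, θ'))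
          ((fderiv ℝ (fderiv ℝ f) (t, θ)).comp
            ((0 : EuclideanSpace ℝ (Fin p) →L[ℝ] ℝ).prod (ContinuousLinearMap.id ℝ _))) θ := by
        have h1 : HasFDerivAt (fun θ' : EuclideanSpace ℝ (Fin p) => ((t, θ') : ℝ × _))
            ((0 : EuclideanSpace ℝ (Fin p) →L[ℝ] ℝ).prod (ContinuousLinearMap.id ℝ _)) θ :=
          (hasFDerivAt_const t θ).prodMk (hasFDerivAt_id θ)
        exact ((hf'diff (t, θ)).hasFDerivAt).comp θ h1
      have hG : HasFDerivAt
          (fun θ' => fderiv ℝ f (t, θ') ((1 : ℝ), (0 : EuclideanSpace ℝ (Fin p))))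
          (((fderiv ℝ (fderiv ℝ f) (t, θ)).comp
            ((0 : EuclideanSpace ℝ (Fin p) →L[ℝ] ℝ).prod (ContinuousLinearMap.id ℝ _))).flip
              ((1 : ℝ), (0 : EuclideanSpace ℝ (Fin p)))) θ := by
        have := hGmap.clm_apply
          (hasFDerivAt_const ((1 : ℝ), (0 : EuclideanSpace ℝ (Fin p))) θ)
        simpa using this
      -- RHS function: θ' ↦ ψ (s t θ') t θ'
      have hmap : HasFDerivAt
          (fun θ' : EuclideanSpace ℝ (Fin p) => ((s t θ', t, θ') : _ × ℝ × _))
          (((fderiv ℝ f (t, θ)).comp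
            ((0 : EuclideanSpace ℝ (Fin p) →L[ℝ] ℝ).prod (ContinuousLinearMap.id ℝ _))).prod
              ((0 : EuclideanSpace ℝ (Fin p) →L[ℝ] ℝ).prod (ContinuousLinearMap.id ℝ _))) θ :=
        (hpart t θ).prodMk ((hasFDerivAt_const t θ).prodMk (hasFDerivAt_id θ))
      have hh : HasFDerivAt (fun θ' => ψ (s t θ') t θ')
          ((fderiv ℝ Ψ (s t θ, t, θ)).comp
            (((fderiv ℝ f (t, θ)).comp
              ((0 : EuclideanSpace ℝ (Fin p) →L[ℝ] ℝ).prod (ContinuousLinearMap.id ℝ _))).prod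
                ((0 : EuclideanSpace ℝ (Fin p) →L[ℝ] ℝ).prod (ContinuousLinearMap.id ℝ _)))) θ :=
        ((hΨdiff _).hasFDerivAt).comp _ hmap
      -- the two functions agree near θ
      have heq : (fun θ' => fderiv ℝ f (t, θ') ((1 : ℝ), (0 : EuclideanSpace ℝ (Fin p))))
          =ᶠ[nhds θ] fun θ' => ψ (s t θ') t θ' :=
        Filter.eventuallyEq_of_mem hU (fun θ' hθ' => hfe t htI θ' hθ')
      have hfd : fderiv ℝ (fun θ' => fderiv ℝ f (t, θ') ((1 : ℝ), (0 : EuclideanSpace ℝ (Fin p)))) θ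
          = fderiv ℝ (fun θ' => ψ (s t θ') t θ') θ := heq.fderiv_eq
      have e1 := hG.fderiv
      have e2 := hh.fderiv
      rw [e1] at hfd
      have := congrArg (fun (L : EuclideanSpace ℝ (Fin p) →L[ℝ] EuclideanSpace ℝ (Fin m)) => L u)
        (hfd.trans e2)
      simp only [ContinuousLinearMap.flip_apply, ContinuousLinearMap.comp_apply,
        ContinuousLinearMap.prod_apply, ContinuousLinearMap.coe_id', id_eq,
        ContinuousLinearMap.zero_apply] at this
      rw [this, (hA t).fderiv, (hB t).fderiv]
      simp [hv_def, Prod.mk_add_mk, ← (fderiv ℝ Ψ (s t θ, t, θ)).map_add]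
    rw [← key]
    exact hv t
  -- derivative of g t = ⟪r t, v t⟫
  set g : ℝ → ℝ := fun t => ⟪r t, v t⟫ with hg_def
  have hg : ∀ t ∈ Icc t₀ t₁, HasDerivAt g
      ⟪r t, (fderiv ℝ (fun θ' => ψ (s t θ) t θ') θ) u⟫ t := by
    intro t htI
    have h1 := (hr t htI).inner ℝ (hv' t htI)
    have h2 : ⟪r t, (fderiv ℝ (fun y => ψ y t θ) (s t θ)) (v t)
          + (fderiv ℝ (fun θ' => ψ (s t θ) t θ') θ) u⟫
        + ⟪-(ContinuousLinearMap.adjoint (fderiv ℝ (fun y => ψ y t θ) (s t θ))) (r t), v t⟫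
        = ⟪r t, (fderiv ℝ (fun θ' => ψ (s t θ) t θ') θ) u⟫ := by
      rw [inner_add_right, inner_neg_left, ContinuousLinearMap.adjoint_inner_left]
      ring
    rw [← h2]
    exact h1
  -- integrability of the integrand
  have hc1 : Continuous fun t : ℝ => s t θ :=
    hs.continuous.comp (continuous_id.prodMk continuous_const)
  have hc2 : Continuous fun t : ℝ => fderiv ℝ Ψ (s t θ, t, θ) :=
    (hψ.continuous_fderiv one_ne_zero).comp
      (hc1.prodMk (continuous_id.prodMk continuous_const))
  have hc3 : Continuous fun t : ℝ => (fderiv ℝ (fun θ' => ψ (s t θ) t θ') θ) u := by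
    have : (fun t : ℝ => (fderiv ℝ (fun θ' => ψ (s t θ) t θ') θ) u)
        = fun t : ℝ => fderiv ℝ Ψ (s t θ, t, θ)
            ((0 : EuclideanSpace ℝ (Fin m)), (0 : ℝ), u) := by
      funext t
      rw [(hB t).fderiv]
      simp
    rw [this]
    exact hc2.clm_apply continuous_const
  have rcont : ContinuousOn r (Icc t₀ t₁) :=
    fun t htI => (hr t htI).continuousAt.continuousWithinAt
  have hint : IntervalIntegrable
      (fun t => ⟪r t, (fderiv ℝ (fun θ' => ψ (s t θ) t θ') θ) u⟫) volume t₀ t₁ := by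
    apply ContinuousOn.intervalIntegrable
    rw [uIcc_of_le ht]
    exact rcont.inner hc3.continuousOn
  -- FTC
  have hFTC : ∫ t in t₀..t₁, ⟪r t, (fderiv ℝ (fun θ' => ψ (s t θ) t θ') θ) u⟫
      = g t₁ - g t₀ := by
    apply intervalIntegral.integral_eq_sub_of_hasDerivAt
    · intro t htI
      rw [uIcc_of_le ht] at htI
      exact hg t htI
    · exact hint
  -- g t₀ = 0
  have hv0 : v t₀ = 0 := by
    have heq0 : (fun θ' => s t₀ θ') =ᶠ[nhds θ] fun _ => s t₀ θ :=
      Filter.eventuallyEq_of_mem hU hinit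
    have h0 : fderiv ℝ (fun θ' => s t₀ θ') θ = 0 := by
      rw [heq0.fderiv_eq, fderiv_fun_const]
      rfl
    rw [← hvt t₀, h0]
    rfl
  have hg0 : g t₀ = 0 := by
    rw [hg_def]
    simp [hv0]
  rw [hvt t₁, hFTC, hg0, sub_zero]
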